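/- Let f = a_0 + a_1 z + ... + a_n z^n ∈ ℤ[z] be a primitive polynomial of degree n with a_0·a_n ≠ 0, and let Δ be a positive integer with Δ ≤ n such that f has no nonconstant factor of degree less than Δ in ℤ[z]. Suppose there exist positive integers m, d, k and a prime p with p ∤ d such that m ≥ h_f + 1, (m − 1 − h_f)^Δ ≥ d, |s_n(m)| = |a_n| = p^k · d, and |s_0(m)|/q ≤ |s_n(m)|, where q is the smallest prime divisor of |s_0(m)| = |f(m)|. Then f is a product of at most min_{1 ≤ i ≤ n} { k, i + v_p(s_{n−i}(m)) } irreducible polynomials in ℤ[z]. In particular, if k = 1, or if p ∤ s_{n−1}(m), then f is irreducible in ℤ[z]. -/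

import Mathlib

open Polynomial

/-- The height `h_f = max_{0 ≤ i ≤ n-1} |a_i|/|a_n|` of a polynomial
`f = a_0 + a_1 z + ⋯ + a_n z^n` of degree `n`. -/
noncomputable def height (f : Polynomial ℤ) : ℝ :=
  ⨆ i : Fin f.natDegree, (|f.coeff i| : ℝ) / |f.coeff f.natDegree|

/-- `v_p(a)` with values in `ℕ∞`, where `v_p(0) = ∞`. -/
noncomputable def intVal (p : ℕ) (a : ℤ) : ℕ∞ :=
  if a = 0 then ⊤ else (padicValInt p a : ℕ∞)



-- nonstrict product bound
lemma prod_ge (c : ℝ) (hc : 0 ≤ c) : ∀ s : Multiset ℝ, (∀ x ∈ s, c ≤ x) →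
    c ^ (Multiset.card s) ≤ s.prod := by
  intro s
  induction s using Multiset.induction with
  | empty => simp
  | cons a t ih =>
    intro h
    simp only [Multiset.card_cons, Multiset.prod_cons, pow_succ]
    rw [mul_comm (c ^ _) c]
    exact mul_le_mul (h a (Multiset.mem_cons_self a t))
      (ih (fun x hx => h x (Multiset.mem_cons_of_mem hx)))
      (pow_nonneg hc _) ((hc.trans (h a (Multiset.mem_cons_self a t))))

lemma prod_gt (c : ℝ) (hc : 1 ≤ c) (s : Multiset ℝ) (hs : ∀ x ∈ s, c < x)
    (Δ : ℕ) (hΔ : 0 < Δ) (hcard : Δ ≤ Multiset.card s) : c ^ Δ < s.prod := by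
  have hc0 : (0:ℝ) ≤ c := le_trans zero_le_one hc
  obtain ⟨a, t, rfl⟩ : ∃ a t, s = a ::ₘ t := by
    rcases Multiset.exists_mem_of_ne_zero (s := s) (by
      intro h; subst h; simp at hcard; omega) with ⟨a, ha⟩
    exact ⟨a, _, (Multiset.cons_erase ha).symm⟩
  have h1 : c ^ (Multiset.card t) ≤ t.prod :=
    prod_ge c hc0 t (fun x hx => (hs x (Multiset.mem_cons_of_mem hx)).le)
  have h2 : c ^ (Multiset.card (a ::ₘ t)) < (a ::ₘ t).prod := by
    simp only [Multiset.card_cons, Multiset.prod_cons, pow_succ]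
    rw [mul_comm (c ^ _) c]
    have : c * c ^ Multiset.card t < a * t.prod := by
      apply mul_lt_mul (hs a (Multiset.mem_cons_self a t)) h1
      · exact pow_pos (lt_of_lt_of_le one_pos hc) _
      · exact le_trans hc0 (hs a (Multiset.mem_cons_self a t)).le
    exact this
  calc c ^ Δ ≤ c ^ (Multiset.card (a ::ₘ t)) := pow_le_pow_right₀ hc hcard
    _ < _ := h2


lemma height_ge (f : Polynomial ℤ) (i : ℕ) (hi : i < f.natDegree) :
    |(f.coeff i : ℝ)| / |(f.coeff f.natDegree : ℝ)| ≤ height f := by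
  have h := le_ciSup (f := fun j : Fin f.natDegree => (|f.coeff j| : ℝ) / |f.coeff f.natDegree|)
    (Set.Finite.bddAbove (Set.finite_range _)) ⟨i, hi⟩
  unfold height
  push_cast at h ⊢
  exact h

lemma coeff_le_height (f : Polynomial ℤ) (hf : f.coeff f.natDegree ≠ 0)
    (i : ℕ) (hi : i < f.natDegree) :
    |(f.coeff i : ℝ)| ≤ height f * |(f.coeff f.natDegree : ℝ)| := by
  have h2 : (0:ℝ) < |(f.coeff f.natDegree : ℝ)| := by
    rw [abs_pos]; exact_mod_cast hf
  have h := height_ge f i hi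
  rw [div_le_iff₀ h2] at h
  linarith

lemma leadingCoeff_ne (f : Polynomial ℤ) (h0 : f.coeff 0 ≠ 0) : f.coeff f.natDegree ≠ 0 := by
  have : f ≠ 0 := fun h => by simp [h] at h0
  simpa [Polynomial.coeff_natDegree] using Polynomial.leadingCoeff_ne_zero.mpr this

lemma height_pos (f : Polynomial ℤ) (h0 : f.coeff 0 ≠ 0) (hn : 0 < f.natDegree) :
    0 < height f := by
  refine lt_of_lt_of_le ?_ (height_ge f 0 hn)
  apply div_pos
  · rw [abs_pos]; exact_mod_cast h0
  · rw [abs_pos]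
    exact_mod_cast leadingCoeff_ne f h0

-- root bound: every complex root ζ of f has |ζ| < 1 + height f
lemma root_bound (f : Polynomial ℤ) (h0 : f.coeff 0 ≠ 0) (hn : 0 < f.natDegree)
    (ζ : ℂ) (hζ : Polynomial.aeval ζ f = 0) : ‖ζ‖ < 1 + height f := by
  have hlc : f.coeff f.natDegree ≠ 0 := leadingCoeff_ne f h0
  by_contra hcon
  push_neg at hcon
  set h := height f with hh
  have hpos : 0 < h := height_pos f h0 hn
  set t := ‖ζ‖ with ht
  have ht1 : 1 < t := by linarith
  set n := f.natDegree with hdn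
  set A : ℝ := |(f.coeff n : ℝ)| with hA'
  have hA : (0:ℝ) < A := by rw [hA', abs_pos]; exact_mod_cast hlc
  have heval : ∑ i ∈ Finset.range (n+1), (f.coeff i : ℂ) * ζ ^ i = 0 := by
    rw [← hζ, Polynomial.aeval_def, Polynomial.eval₂_eq_sum_range]
    simp; rfl
  have hsplit : (f.coeff n : ℂ) * ζ ^ n = - ∑ i ∈ Finset.range n, (f.coeff i : ℂ) * ζ ^ i := by
    have := Finset.sum_range_succ (fun i => (f.coeff i : ℂ) * ζ ^ i) n
    rw [this] at heval
    linear_combination heval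
  have habs : A * t ^ n ≤ ∑ i ∈ Finset.range n, |(f.coeff i : ℝ)| * t ^ i := by
    have h1 : ∀ j : ℕ, ‖(f.coeff j : ℂ) * ζ ^ j‖ = |(f.coeff j : ℝ)| * t ^ j := by
      intro j
      rw [norm_mul, norm_pow]
      congr 1
      exact Complex.norm_intCast _
    calc A * t ^ n = ‖(f.coeff n : ℂ) * ζ ^ n‖ := (h1 n).symm
      _ = ‖∑ i ∈ Finset.range n, (f.coeff i : ℂ) * ζ ^ i‖ := by
          rw [hsplit, norm_neg]
      _ ≤ ∑ i ∈ Finset.range n, ‖(f.coeff i : ℂ) * ζ ^ i‖ :=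
          norm_sum_le _ _
      _ = ∑ i ∈ Finset.range n, |(f.coeff i : ℝ)| * t ^ i := by
          exact Finset.sum_congr rfl (fun i _ => h1 i)
  have hbound : ∑ i ∈ Finset.range n, |(f.coeff i : ℝ)| * t ^ i
      ≤ h * A * ((t ^ n - 1)/(t - 1)) := by
    have hgeom : ∑ i ∈ Finset.range n, t ^ i = (t ^ n - 1)/(t-1) := by
      rw [geom_sum_eq (by linarith)]
    calc ∑ i ∈ Finset.range n, |(f.coeff i : ℝ)| * t ^ i
        ≤ ∑ i ∈ Finset.range n, (h * A) * t ^ i := by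
          apply Finset.sum_le_sum; intro i hi
          apply mul_le_mul_of_nonneg_right (coeff_le_height f hlc i (Finset.mem_range.mp hi))
          positivity
      _ = h * A * ((t ^ n - 1)/(t - 1)) := by rw [← Finset.mul_sum, hgeom]
  have htn : (1:ℝ) ≤ t ^ n := one_le_pow₀ ht1.le
  have hfin : h * A * ((t ^ n - 1)/(t - 1)) ≤ A * (t ^ n - 1) := by
    rw [mul_comm h A, mul_assoc]
    apply mul_le_mul_of_nonneg_left _ hA.le
    rw [mul_div_assoc', div_le_iff₀ (by linarith : (0:ℝ) < t - 1)]
    nlinarith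
  nlinarith


lemma value_lemma (f g : Polynomial ℤ) (h0 : f.coeff 0 ≠ 0) (hn : 0 < f.natDegree)
    (hdvd : g ∣ f) (Δ : ℕ) (hΔ0 : 0 < Δ) (hgdeg : Δ ≤ g.natDegree)
    (m d : ℕ) (hd : 0 < d)
    (hm1 : height f + 1 ≤ (m:ℝ)) (hm2 : (d:ℝ) ≤ ((m:ℝ) - 1 - height f)^Δ) :
    g.leadingCoeff.natAbs * d + 1 ≤ (g.eval (m:ℤ)).natAbs := by
  set c : ℝ := (m:ℝ) - 1 - height f with hc'
  have hc0 : 0 ≤ c := by rw [hc']; linarith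
  have hc1 : 1 ≤ c := by
    by_contra hcon
    push_neg at hcon
    have : c ^ Δ < 1 := pow_lt_one₀ hc0 hcon hΔ0.ne'
    have hd1 : (1:ℝ) ≤ (d:ℝ) := by exact_mod_cast hd
    linarith
  have hg0 : g ≠ 0 := by
    intro h; rw [h] at hgdeg; simp at hgdeg; omega
  set φ : ℤ →+* ℂ := Int.castRingHom ℂ with hφ
  have hinj : Function.Injective φ := Int.cast_injective
  set G : Polynomial ℂ := g.map φ with hG
  have hG0 : G ≠ 0 := (Polynomial.map_ne_zero_iff hinj).mpr hg0
  have hsplits : Splits G := IsAlgClosed.splits G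
  have hroots : Multiset.card G.roots = G.natDegree :=
    (Polynomial.splits_iff_card_roots.mp hsplits)
  have hGdeg : G.natDegree = g.natDegree := Polynomial.natDegree_map_eq_of_injective hinj g
  have hGlc : G.leadingCoeff = (g.leadingCoeff : ℂ) := Polynomial.leadingCoeff_map_of_injective hinj g
  -- every root of G is bounded
  have hrootb : ∀ ζ ∈ G.roots, ‖(m:ℂ) - ζ‖ > c := by
    intro ζ hζ
    have hroot : Polynomial.aeval ζ g = 0 := by
      have := Polynomial.isRoot_of_mem_roots hζ
      rwa [Polynomial.IsRoot, Polynomial.eval_map, hφ, ← algebraMap_int_eq,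
        ← Polynomial.aeval_def] at this
    have hrootf : Polynomial.aeval ζ f = 0 := by
      obtain ⟨h, rfl⟩ := hdvd
      rw [map_mul, hroot, zero_mul]
    have hb := root_bound f h0 hn ζ hrootf
    have h1 : ‖(m:ℂ)‖ - ‖ζ‖ ≤ ‖(m:ℂ) - ζ‖ :=
      norm_sub_norm_le _ _
    have h2 : ‖(m:ℂ)‖ = (m:ℝ) := by
      exact Complex.norm_natCast m
    rw [h2] at h1
    rw [hc']; linarith
  -- eval expression
  have heval : G.eval (m:ℂ) = G.leadingCoeff * ((G.roots.map (fun a => (m:ℂ) - a)).prod) := by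
    conv_lhs => rw [hsplits.eq_prod_roots]
    rw [Polynomial.eval_mul, Polynomial.eval_C, Polynomial.eval_multiset_prod, Multiset.map_map]
    congr 2
    exact Multiset.map_congr rfl (fun a _ => by simp)
  have habs : ‖G.eval (m:ℂ)‖ =
      ‖G.leadingCoeff‖ * ((G.roots.map (fun a => ‖(m:ℂ) - a‖)).prod) := by
    rw [heval, norm_mul]
    have := map_multiset_prod (normHom : ℂ →*₀ ℝ) (G.roots.map (fun a => (m:ℂ) - a))
    rw [Multiset.map_map] at this
    exact congrArg _ this
  have hprod : (d:ℝ) < (G.roots.map (fun a => ‖(m:ℂ) - a‖)).prod := by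
    refine lt_of_le_of_lt hm2 (prod_gt c hc1 _ ?_ Δ hΔ0 ?_)
    · intro x hx
      obtain ⟨a, ha, rfl⟩ := Multiset.mem_map.mp hx
      exact hrootb a ha
    · rw [Multiset.card_map, hroots, hGdeg]; exact hgdeg
  have hlcpos : (0:ℝ) < |(g.leadingCoeff : ℝ)| := by
    rw [abs_pos]; exact_mod_cast Polynomial.leadingCoeff_ne_zero.mpr hg0
  have hGlcabs : ‖G.leadingCoeff‖ = |(g.leadingCoeff : ℝ)| := by
    rw [hGlc]; exact Complex.norm_intCast _
  have hGeval : G.eval (m:ℂ) = ((g.eval (m:ℤ) : ℤ) : ℂ) := by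
    rw [hG, Polynomial.eval_map]
    have : ((m:ℂ)) = φ ((m:ℕ):ℤ) := by simp [hφ]
    rw [this, Polynomial.eval₂_at_apply]
    simp [hφ]
  have key : |(g.leadingCoeff : ℝ)| * (d:ℝ) < |((g.eval (m:ℤ) : ℤ) : ℝ)| := by
    have h3 : ‖G.eval (m:ℂ)‖ = |((g.eval (m:ℤ) : ℤ) : ℝ)| := by
      rw [hGeval]; exact Complex.norm_intCast _
    rw [← h3, habs, hGlcabs]
    exact (mul_lt_mul_iff_right₀ hlcpos).mpr hprod
  -- conclude in ℕ
  have : (g.leadingCoeff.natAbs * d : ℝ) < ((g.eval (m:ℤ)).natAbs : ℝ) := by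
    push_cast [Nat.cast_natAbs]
    exact key
  have h2 : g.leadingCoeff.natAbs * d < (g.eval (m:ℤ)).natAbs := by exact_mod_cast this
  omega


lemma prod_lt_prod {α : Type*} (F G : α → ℕ) :
    ∀ s : Multiset α, s ≠ 0 → (∀ x ∈ s, 0 < F x ∧ F x < G x) →
      (s.map F).prod < (s.map G).prod := by
  intro s
  induction s using Multiset.induction with
  | empty => intro h; exact absurd rfl h
  | cons a t ih =>
    intro _ h
    simp only [Multiset.map_cons, Multiset.prod_cons]
    rcases eq_or_ne t 0 with rfl | ht
    · simpa using (h a (Multiset.mem_cons_self a _)).2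
    · have h1 := h a (Multiset.mem_cons_self a t)
      have h2 := ih ht (fun x hx => h x (Multiset.mem_cons_of_mem hx))
      have hF : 0 < (t.map F).prod := by
        apply Multiset.prod_pos
        intro x hx
        obtain ⟨y, hy, rfl⟩ := Multiset.mem_map.mp hx
        exact (h y (Multiset.mem_cons_of_mem hy)).1
      calc F a * (t.map F).prod < G a * (t.map G).prod := by
            apply Nat.mul_lt_mul_of_lt_of_le h1.2 h2.le
            omega
        _ ≤ G a * (t.map G).prod := le_refl _

lemma pow_card_dvd_prod (p : ℕ) :
    ∀ s : Multiset ℕ, (∀ x ∈ s, p ∣ x) → p ^ (Multiset.card s) ∣ s.prod := by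
  intro s
  induction s using Multiset.induction with
  | empty => simp
  | cons a t ih =>
    intro h
    simp only [Multiset.card_cons, Multiset.prod_cons, pow_succ]
    rw [mul_comm (p ^ _) p]
    exact mul_dvd_mul (h a (Multiset.mem_cons_self a t))
      (ih (fun x hx => h x (Multiset.mem_cons_of_mem hx)))

lemma coeff_dvd_aux (p : ℕ) :
    ∀ (s : Multiset (Polynomial ℤ)), (∀ g ∈ s, g ≠ 0 ∧ (p:ℤ) ∣ g.leadingCoeff) →
    ∀ b, (p:ℤ) ^ (Multiset.card s - (s.prod.natDegree - b)) ∣ s.prod.coeff b := by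
  intro s
  induction s using Multiset.induction with
  | empty =>
    intro _ b
    simp only [Multiset.prod_zero, Multiset.card_zero, Polynomial.natDegree_one,
      Nat.zero_sub, pow_zero]
    exact one_dvd _
  | cons g t ih =>
    intro h b
    have hg := h g (Multiset.mem_cons_self g t)
    have ht := fun x hx => h x (Multiset.mem_cons_of_mem hx)
    have hQ0 : t.prod ≠ 0 := Multiset.prod_ne_zero (fun h0 => (ht 0 h0).1 rfl)
    simp only [Multiset.prod_cons, Multiset.card_cons]
    set Q := t.prod with hQ
    set ng := g.natDegree with hng
    set NQ := Q.natDegree with hNQ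
    have hdeg : (g * Q).natDegree = ng + NQ := Polynomial.natDegree_mul hg.1 hQ0
    rw [Polynomial.coeff_mul]
    apply Finset.dvd_sum
    rintro ⟨x, y⟩ hxy
    have hb : x + y = b := Finset.HasAntidiagonal.mem_antidiagonal.mp hxy
    simp only []
    by_cases hx : ng < x
    · rw [Polynomial.coeff_eq_zero_of_natDegree_lt hx, zero_mul]
      exact dvd_zero _
    by_cases hy : NQ < y
    · rw [Polynomial.coeff_eq_zero_of_natDegree_lt hy, mul_zero]
      exact dvd_zero _
    push_neg at hx hy
    have hIH := ih ht y
    by_cases hx2 : x = ng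
    · -- leading coefficient of g contributes a factor p
      have hpl : (p:ℤ) ∣ g.coeff x := by
        rw [hx2, hng]
        exact hg.2
      have hle : Multiset.card t + 1 - ((g*Q).natDegree - b) ≤
          1 + (Multiset.card t - (NQ - y)) := by
        rw [hdeg]; omega
      refine dvd_trans (pow_dvd_pow _ hle) ?_
      rw [pow_add, pow_one]
      exact mul_dvd_mul hpl hIH
    · have hxlt : x < ng := lt_of_le_of_ne hx hx2
      have hle : Multiset.card t + 1 - ((g*Q).natDegree - b) ≤
          Multiset.card t - (NQ - y) := by
        rw [hdeg]; omega
      refine dvd_trans (pow_dvd_pow _ hle) ?_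
      exact Dvd.dvd.mul_left hIH _

lemma natAbs_prod (s : Multiset ℤ) : s.prod.natAbs = (s.map Int.natAbs).prod := by
  induction s using Multiset.induction with
  | empty => simp
  | cons a t ih => simp [Int.natAbs_mul, ih]


/-- Theorem 5: let `f` be primitive of degree `n` with `a_0 a_n ≠ 0`, and let
`Δ ≤ n` be a positive integer such that `f` has no nonconstant factor of degree
less than `Δ` in `ℤ[z]`. If there are positive integers `m, d, k` and a prime
`p ∤ d` with `m ≥ h_f + 1`, `(m - 1 - h_f)^Δ ≥ d`, `|s_n(m)| = |a_n| = p^k d` and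
`|s_0(m)|/q ≤ |s_n(m)|` where `q` is the smallest prime divisor of
`|s_0(m)| = |f(m)|`, then `f` is a product of at most
`min_{1 ≤ i ≤ n} {k, i + v_p(s_{n-i}(m))}` irreducible polynomials in `ℤ[z]`
(with `s_i = f^{(i)}/i!` and `v_p(0) = ∞`); in particular, if `k = 1` or
`p ∤ s_{n-1}(m)`, then `f` is irreducible. -/
theorem statement4
    (f : Polynomial ℤ) (n : ℕ) (hdeg : f.natDegree = n)
    (ha : f.coeff 0 * f.coeff n ≠ 0) (hprim : f.IsPrimitive)
    (Δ : ℕ) (hΔ0 : 0 < Δ) (hΔn : Δ ≤ n)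
    (hΔ : ∀ g : Polynomial ℤ, g ∣ f → 0 < g.natDegree → Δ ≤ g.natDegree)
    (m d k : ℕ) (hm : 0 < m) (hd : 0 < d) (hk : 0 < k)
    (p : ℕ) (hp : Nat.Prime p) (hpd : ¬ p ∣ d)
    (hm1 : height f + 1 ≤ (m : ℝ))
    (hm2 : (d : ℝ) ≤ ((m : ℝ) - 1 - height f) ^ Δ)
    (hsn : (f.coeff n).natAbs = p ^ k * d)
    (q : ℕ) (hq : Nat.Prime q) (hqdvd : q ∣ (f.eval (m : ℤ)).natAbs)
    (hqmin : ∀ q', Nat.Prime q' → q' ∣ (f.eval (m : ℤ)).natAbs → q ≤ q')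
    (hq0 : ((f.eval (m : ℤ)).natAbs : ℚ) / (q : ℚ) ≤ ((f.coeff n).natAbs : ℚ)) :
    (∃ (u : ℤˣ) (gs : Multiset (Polynomial ℤ)),
      (Multiset.card gs : ℕ∞) ≤
        (Finset.Icc 1 n).inf
          (fun i => min (k : ℕ∞)
            ((i : ℕ∞) + intVal p ((Polynomial.hasseDeriv (n - i) f).eval (m : ℤ)))) ∧
      (∀ g ∈ gs, 0 < g.natDegree ∧ Irreducible g) ∧
      f = Polynomial.C (u : ℤ) * gs.prod) ∧
    ((k = 1 ∨ ¬ ((p : ℤ) ∣ (Polynomial.hasseDeriv (n - 1) f).eval (m : ℤ))) →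
      Irreducible f) := by
  haveI : Fact p.Prime := ⟨hp⟩
  have h00 : f.coeff 0 ≠ 0 := fun h => ha (by rw [h, zero_mul])
  have han : f.coeff n ≠ 0 := fun h => ha (by rw [h, mul_zero])
  have hf0 : f ≠ 0 := fun h => h00 (by rw [h]; simp)
  have hn1 : 1 ≤ n := le_trans hΔ0 hΔn
  have hnpos : 0 < f.natDegree := hdeg ▸ hn1
  have hlc : f.leadingCoeff = f.coeff n := by rw [Polynomial.leadingCoeff, hdeg]
  -- factorization
  obtain ⟨fs, hfsirr, hassoc⟩ := WfDvdMonoid.exists_factors f hf0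
  obtain ⟨v, hv⟩ := hassoc
  obtain ⟨r0, hr0u, hr0⟩ := Polynomial.isUnit_iff.mp v.isUnit
  have hfeq : f = Polynomial.C r0 * fs.prod := by
    rw [← hv, ← hr0]; ring
  set u : ℤˣ := hr0u.unit with hu
  have hur : (u : ℤ) = r0 := rfl
  -- each factor divides f
  have hdvdf : ∀ g ∈ fs, g ∣ f := by
    intro g hg
    rw [hfeq]
    exact Dvd.dvd.mul_left (Multiset.dvd_prod hg) _
  -- each factor has positive degree
  have hpos : ∀ g ∈ fs, 0 < g.natDegree := by
    intro g hg
    rcases Nat.eq_zero_or_pos g.natDegree with h | h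
    swap
    · exact h
    · exfalso
      have heq := Polynomial.eq_C_of_natDegree_eq_zero h
      have hgu : IsUnit g := by
        rw [heq]
        exact Polynomial.isUnit_C.mpr (hprim (g.coeff 0) (heq ▸ hdvdf g hg))
      exact (hfsirr g hg).not_isUnit hgu
  have hgdegΔ : ∀ g ∈ fs, Δ ≤ g.natDegree := fun g hg => hΔ g (hdvdf g hg) (hpos g hg)
  have hgne : ∀ g ∈ fs, g ≠ 0 := fun g hg h0 => by
    have := hpos g hg; rw [h0] at this; simp at this
  set r := Multiset.card fs with hr
  set B : Polynomial ℤ → ℕ := fun g => g.leadingCoeff.natAbs with hB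
  set Gv : Polynomial ℤ → ℕ := fun g => (g.eval (m:ℤ)).natAbs with hGv
  have hu1 : r0.natAbs = 1 := Int.isUnit_iff.mp hr0u |>.elim (fun h => by rw [h]; rfl)
    (fun h => by rw [h]; rfl)
  -- product of leading coeffs
  have hAprod : (fs.map B).prod = p ^ k * d := by
    have h1 : f.leadingCoeff = r0 * fs.prod.leadingCoeff := by
      rw [hfeq, Polynomial.leadingCoeff_mul, Polynomial.leadingCoeff_C]
    have h2 : f.leadingCoeff.natAbs = fs.prod.leadingCoeff.natAbs := by
      rw [h1, Int.natAbs_mul, hu1, one_mul]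
    rw [← hsn, ← hlc, h2, Polynomial.leadingCoeff_multiset_prod, natAbs_prod,
      Multiset.map_map]
    rfl
  -- product of evaluations
  have hFprod : (fs.map Gv).prod = (f.eval (m:ℤ)).natAbs := by
    have h1 : f.eval (m:ℤ) = r0 * (fs.map (fun g => g.eval (m:ℤ))).prod := by
      rw [hfeq, Polynomial.eval_mul, Polynomial.eval_C,
        Polynomial.eval_multiset_prod]
    rw [h1, Int.natAbs_mul, hu1, one_mul, natAbs_prod, Multiset.map_map]
    rfl
  -- value bounds
  have hval : ∀ g ∈ fs, B g * d + 1 ≤ Gv g := fun g hg =>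
    value_lemma f g h00 hnpos (hdvdf g hg) Δ hΔ0 (hgdegΔ g hg) m d hd hm1 hm2
  have hB1 : ∀ g ∈ fs, 1 ≤ B g := by
    intro g hg
    have : g.leadingCoeff ≠ 0 := Polynomial.leadingCoeff_ne_zero.mpr (hgne g hg)
    exact Int.natAbs_pos.mpr this
  -- q ≤ Gv g for each factor
  have hGq : ∀ g ∈ fs, q ≤ Gv g := by
    intro g hg
    have h2 : 2 ≤ Gv g := by
      have := hval g hg
      have := hB1 g hg
      nlinarith
    have hdvdF : Gv g ∣ (f.eval (m:ℤ)).natAbs :=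
      Int.natAbs_dvd_natAbs.mpr (Polynomial.eval_dvd (hdvdf g hg))
    have hmf := Nat.minFac_prime (by omega : Gv g ≠ 1)
    have hmfle : (Gv g).minFac ≤ Gv g := Nat.minFac_le (by omega)
    have := hqmin _ hmf (dvd_trans (Nat.minFac_dvd _) hdvdF)
    omega
  -- F ≤ q * (p^k * d)
  have hFle : (f.eval (m:ℤ)).natAbs ≤ q * (p ^ k * d) := by
    have hq0' : ((f.eval (m:ℤ)).natAbs : ℚ) ≤ (q : ℚ) * ((f.coeff n).natAbs : ℚ) := by
      rw [div_le_iff₀ (by exact_mod_cast hq.pos : (0:ℚ) < (q:ℚ))] at hq0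
      linarith
    have : (f.eval (m:ℤ)).natAbs ≤ q * (f.coeff n).natAbs := by exact_mod_cast hq0'
    rwa [hsn] at this
  -- Step (6): B g0 > d^(r-1) for each factor, when 2 ≤ r
  have hstep6 : 2 ≤ r → ∀ g0 ∈ fs, d ^ (r - 1) < B g0 := by
    intro hr2 g0 hg0
    obtain ⟨t, ht⟩ : ∃ t, fs = g0 ::ₘ t := ⟨fs.erase g0, (Multiset.cons_erase hg0).symm⟩
    have hct : Multiset.card t = r - 1 := by
      rw [hr, ht]; simp
    have ht0 : t ≠ 0 := by
      intro h; rw [h] at hct; simp at hct; omega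
    have hmemt : ∀ g ∈ t, g ∈ fs := fun g hg => ht ▸ Multiset.mem_cons_of_mem hg
    have hFsplit : (f.eval (m:ℤ)).natAbs = Gv g0 * (t.map Gv).prod := by
      rw [← hFprod, ht, Multiset.map_cons, Multiset.prod_cons]
    have hq1 : q * (t.map Gv).prod ≤ (f.eval (m:ℤ)).natAbs := by
      rw [hFsplit]
      exact Nat.mul_le_mul_right _ (hGq g0 hg0)
    have hPGle : (t.map Gv).prod ≤ p ^ k * d :=
      Nat.le_of_mul_le_mul_left (le_trans hq1 hFle) hq.pos
    have hPBlt : (t.map (fun g => B g * d)).prod < (t.map Gv).prod := by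
      apply prod_lt_prod _ _ t ht0
      intro g hg
      constructor
      · have := hB1 g (hmemt g hg); positivity
      · have := hval g (hmemt g hg); omega
    have hPB : (t.map (fun g => B g * d)).prod = (t.map B).prod * d ^ (r - 1) := by
      rw [← hct]
      rw [Multiset.prod_map_mul]
      congr 1
      rw [Multiset.map_const', Multiset.prod_replicate]
    have hAsplit : B g0 * (t.map B).prod = p ^ k * d := by
      rw [← hAprod, ht, Multiset.map_cons, Multiset.prod_cons]
    have key : (p ^ k * d) * d ^ (r - 1) < (p ^ k * d) * B g0 := by
      calc (p ^ k * d) * d ^ (r - 1) = B g0 * ((t.map B).prod * d ^ (r-1)) := by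
            rw [← hAsplit]; ring
        _ = B g0 * (t.map (fun g => B g * d)).prod := by rw [hPB]
        _ < B g0 * (t.map Gv).prod := by
            have hb0 : 0 < B g0 := hB1 g0 hg0
            exact (Nat.mul_lt_mul_left hb0).mpr hPBlt
        _ ≤ B g0 * (p ^ k * d) := Nat.mul_le_mul_left _ hPGle
        _ = (p ^ k * d) * B g0 := by ring
    exact Nat.lt_of_mul_lt_mul_left key
  -- Step (7): p divides every leading coefficient, when 2 ≤ r
  have hstep7 : 2 ≤ r → ∀ g ∈ fs, (p:ℤ) ∣ g.leadingCoeff := by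
    intro hr2 g hg
    by_contra hnd
    have hnd' : ¬ p ∣ B g := fun h => hnd (Int.natCast_dvd.mpr h)
    have hBdvd : B g ∣ p ^ k * d := by
      rw [← hAprod]
      exact Multiset.dvd_prod (Multiset.mem_map_of_mem B hg)
    have hcop : Nat.Coprime (B g) (p ^ k) :=
      Nat.Coprime.pow_right _ (((Nat.Prime.coprime_iff_not_dvd hp).mpr hnd').symm)
    have hBd : B g ∣ d := by
      rw [mul_comm] at hBdvd
      exact hcop.dvd_of_dvd_mul_right hBdvd
    have hBled : B g ≤ d := Nat.le_of_dvd hd hBd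
    have := hstep6 hr2 g hg
    have hdle : d ≤ d ^ (r - 1) := Nat.le_self_pow (by omega) d
    omega
  -- Step (8): r ≤ k when 2 ≤ r
  have hstep8 : 2 ≤ r → r ≤ k := by
    intro hr2
    have hdvd : p ^ r ∣ p ^ k * d := by
      rw [← hAprod]
      have := pow_card_dvd_prod p (fs.map B) (by
        intro x hx
        obtain ⟨g, hg, rfl⟩ := Multiset.mem_map.mp hx
        exact Int.natCast_dvd.mp (hstep7 hr2 g hg))
      rwa [Multiset.card_map] at this
    by_contra hcon
    push_neg at hcon
    have h1 : p ^ (k+1) ∣ p ^ k * d := dvd_trans (pow_dvd_pow p (by omega)) hdvd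
    rw [pow_succ] at h1
    have : p ∣ d := (Nat.mul_dvd_mul_iff_left (pow_pos hp.pos k)).mp h1
    exact hpd this
  -- Step (9): p^(r-i) divides s_{n-i}(m) when 2 ≤ r
  have hstep9 : 2 ≤ r → ∀ i, i ≤ n →
      (p:ℤ) ^ (r - i) ∣ (Polynomial.hasseDeriv (n - i) f).eval (m:ℤ) := by
    intro hr2 i hin
    set T : Polynomial ℤ → Polynomial ℤ := fun g => Polynomial.taylor (m:ℤ) g with hT
    have hTf : Polynomial.taylor (m:ℤ) f = Polynomial.C r0 * (fs.map T).prod := by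
      rw [hfeq, Polynomial.taylor_apply, Polynomial.mul_comp, Polynomial.C_comp,
        Polynomial.multiset_prod_comp]
      congr 2
    have hTprops : ∀ g' ∈ fs.map T, g' ≠ 0 ∧ (p:ℤ) ∣ g'.leadingCoeff := by
      intro g' hg'
      obtain ⟨g, hg, rfl⟩ := Multiset.mem_map.mp hg'
      have hglc : (T g).leadingCoeff = g.leadingCoeff := by
        show (Polynomial.taylor (m:ℤ) g).leadingCoeff = g.leadingCoeff
        rw [Polynomial.taylor_apply, Polynomial.leadingCoeff_comp (by
          rw [Polynomial.natDegree_X_add_C]; omega), Polynomial.leadingCoeff_X_add_C,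
          one_pow, mul_one]
      refine ⟨?_, hglc ▸ hstep7 hr2 g hg⟩
      intro h0
      exact hgne g hg (by simpa [hT] using h0)
    have hP0 : (fs.map T).prod ≠ 0 := Multiset.prod_ne_zero (fun h0 => (hTprops 0 h0).1 rfl)
    have hPdeg : (fs.map T).prod.natDegree = n := by
      have h1 : (Polynomial.taylor (m:ℤ) f).natDegree = n := by
        rw [Polynomial.natDegree_taylor, hdeg]
      rw [hTf] at h1
      rwa [Polynomial.natDegree_mul (by
        intro h0
        rw [Polynomial.C_eq_zero] at h0
        exact hr0u.ne_zero h0) hP0, Polynomial.natDegree_C, zero_add] at h1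
    have hco := coeff_dvd_aux p (fs.map T) hTprops (n - i)
    rw [hPdeg, Multiset.card_map] at hco
    have hni : n - (n - i) = i := by omega
    rw [hni, ← hr] at hco
    have hcoeff : (Polynomial.hasseDeriv (n - i) f).eval (m:ℤ) =
        r0 * (fs.map T).prod.coeff (n - i) := by
      rw [← Polynomial.taylor_coeff, hTf, Polynomial.coeff_C_mul]
    rw [hcoeff]
    exact Dvd.dvd.mul_left hco r0
  -- the main bound
  have main : ∀ i ∈ Finset.Icc 1 n, (r : ℕ∞) ≤
      min (k : ℕ∞) ((i : ℕ∞) + intVal p ((Polynomial.hasseDeriv (n - i) f).eval (m:ℤ))) := by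
    intro i hi
    obtain ⟨hi1, hin⟩ := Finset.mem_Icc.mp hi
    rcases le_or_gt r 1 with hr1 | hr2
    · apply le_min
      · calc (r : ℕ∞) ≤ 1 := by exact_mod_cast hr1
          _ ≤ (k : ℕ∞) := by exact_mod_cast hk
      · calc (r : ℕ∞) ≤ 1 := by exact_mod_cast hr1
          _ ≤ (i : ℕ∞) := by exact_mod_cast hi1
          _ ≤ _ := le_self_add
    · have hr2' : 2 ≤ r := hr2
      apply le_min
      · exact_mod_cast hstep8 hr2'
      · rcases le_or_gt r i with hri | hir
        · calc (r : ℕ∞) ≤ (i : ℕ∞) := by exact_mod_cast hri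
            _ ≤ _ := le_self_add
        · set s := (Polynomial.hasseDeriv (n - i) f).eval (m:ℤ) with hs
          rcases eq_or_ne s 0 with h0 | h0
          · simp only [intVal, if_pos h0, add_top]
            exact le_top
          · have hdvd := hstep9 hr2' i hin
            have hval' : r - i ≤ padicValInt p s :=
              ((padicValInt_dvd_iff _ _).mp hdvd).resolve_left h0
            simp only [intVal, if_neg h0]
            have hle : r ≤ i + padicValInt p s := by omega
            calc (r : ℕ∞) ≤ ((i + padicValInt p s : ℕ) : ℕ∞) := by exact_mod_cast hle
              _ = (i : ℕ∞) + (padicValInt p s : ℕ∞) := by push_cast; rfl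
  have hfactors : ∀ g ∈ fs, 0 < g.natDegree ∧ Irreducible g :=
    fun g hg => ⟨hpos g hg, hfsirr g hg⟩
  have hfeq' : f = Polynomial.C (u:ℤ) * fs.prod := by rw [hur]; exact hfeq
  refine ⟨⟨u, fs, Finset.le_inf (fun i hi => main i hi), hfactors, hfeq'⟩, ?_⟩
  -- the "in particular" part
  intro hcase
  have h1mem : (1:ℕ) ∈ Finset.Icc 1 n := Finset.mem_Icc.mpr ⟨le_refl _, hn1⟩
  have hm1' := main 1 h1mem
  have h1le : (r : ℕ∞) ≤ 1 := by
    rcases hcase with hk1 | hpnd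
    · refine le_trans hm1' (le_trans (min_le_left _ _) ?_)
      rw [hk1]; exact le_refl _
    · have hs0 : (Polynomial.hasseDeriv (n-1) f).eval (m:ℤ) ≠ 0 :=
        fun h => hpnd (h ▸ dvd_zero _)
      have hv0 : padicValInt p ((Polynomial.hasseDeriv (n-1) f).eval (m:ℤ)) = 0 :=
        padicValInt.eq_zero_of_not_dvd hpnd
      refine le_trans hm1' (le_trans (min_le_right _ _) ?_)
      simp only [intVal, if_neg hs0, hv0]
      norm_num
  have hrle : r ≤ 1 := by exact_mod_cast h1le
  have hrpos : r ≠ 0 := by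
    intro h0
    have : fs = 0 := Multiset.card_eq_zero.mp h0
    rw [this, Multiset.prod_zero, mul_one] at hfeq
    rw [hfeq, Polynomial.natDegree_C] at hnpos
    simp at hnpos
  have hr1 : r = 1 := by omega
  obtain ⟨g, hg⟩ := Multiset.card_eq_one.mp hr1
  have hassoc2 : Associated fs.prod f := ⟨v, hv⟩
  rw [hg, Multiset.prod_singleton] at hassoc2
  exact hassoc2.irreducible (hfsirr g (hg ▸ Multiset.mem_singleton_self g))
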